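/- Let (aᵢ) be a sequence of vectors in ℝ² with ‖aᵢ‖ → 0. Then there exists a choice of signs εᵢ ∈ {1,-1} such that the series ∑ εᵢ aᵢ converges in ℝ². -/

import Mathlib

open Filter Finset

local notation "E2" => EuclideanSpace ℝ (Fin 2)


lemma pair_lemma {δ : ℝ} {u v : E2} (hu : ‖u‖ ≤ δ) (hv : ‖v‖ ≤ δ)
    (h : ‖u‖ * ‖v‖ ≤ 2 * |(inner ℝ u v : ℝ)|) :
    ∃ s : ℝ, (s = 1 ∨ s = -1) ∧ ‖u + s • v‖ ≤ δ := by
  have hδ : 0 ≤ δ := le_trans (norm_nonneg u) hu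
  have key : ∀ s : ℝ, ‖s‖ = 1 → ‖u + s • v‖ ^ 2 = ‖u‖ ^ 2 + 2 * (s * (inner ℝ u v : ℝ)) + ‖v‖ ^ 2 := by
    intro s hs
    rw [norm_add_sq_real, real_inner_smul_right, norm_smul, hs, one_mul]
  rcases le_or_gt 0 (inner ℝ u v : ℝ) with hps | hps
  · refine ⟨-1, Or.inr rfl, ?_⟩
    rw [abs_of_nonneg hps] at h
    have hsq := key (-1) (by simp)
    nlinarith [norm_nonneg u, norm_nonneg v, norm_nonneg (u + (-1 : ℝ) • v)]
  · refine ⟨1, Or.inl rfl, ?_⟩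
    rw [abs_of_neg hps] at h
    have hsq := key 1 (by simp)
    nlinarith [norm_nonneg u, norm_nonneg v, norm_nonneg (u + (1 : ℝ) • v)]

lemma sq_lt_sq'' {a b : ℝ} (ha : 0 ≤ a) (h : a < b) : a ^ 2 < b ^ 2 := by nlinarith

lemma dichotR (x0 x1 y0 y1 z0 z1 α β γ : ℝ)
    (hα2 : α ^ 2 = x0 ^ 2 + x1 ^ 2) (hβ2 : β ^ 2 = y0 ^ 2 + y1 ^ 2) (hγ2 : γ ^ 2 = z0 ^ 2 + z1 ^ 2)
    (hα0 : 0 ≤ α) (hβ0 : 0 ≤ β) (hγ0 : 0 ≤ γ) :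
    α * β ≤ 2 * |x0 * y0 + x1 * y1| ∨ α * γ ≤ 2 * |x0 * z0 + x1 * z1| ∨
      β * γ ≤ 2 * |y0 * z0 + y1 * z1| := by
  by_contra hc
  push_neg at hc
  obtain ⟨h1, h2, h3⟩ := hc
  obtain ⟨p, hpd⟩ : ∃ p : ℝ, p = x0 * y0 + x1 * y1 := ⟨_, rfl⟩
  obtain ⟨q, hqd⟩ : ∃ q : ℝ, q = x0 * z0 + x1 * z1 := ⟨_, rfl⟩
  obtain ⟨r, hrd⟩ : ∃ r : ℝ, r = y0 * z0 + y1 * z1 := ⟨_, rfl⟩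
  obtain ⟨C, hCd⟩ : ∃ C : ℝ, C = x0 * y1 - x1 * y0 := ⟨_, rfl⟩
  obtain ⟨D, hDd⟩ : ∃ D : ℝ, D = x0 * z1 - x1 * z0 := ⟨_, rfl⟩
  rw [← hpd] at h1
  rw [← hqd] at h2
  rw [← hrd] at h3
  have hαβ : 0 < α * β := lt_of_le_of_lt (by positivity) h1
  have hαγ : 0 < α * γ := lt_of_le_of_lt (by positivity) h2
  have hα : 0 < α := by
    rcases hα0.eq_or_lt with h' | h'
    · rw [← h', zero_mul] at hαβ; exact absurd hαβ (lt_irrefl 0)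
    · exact h'
  have hβ : 0 < β := by
    rcases hβ0.eq_or_lt with h' | h'
    · rw [← h', mul_zero] at hαβ; exact absurd hαβ (lt_irrefl 0)
    · exact h'
  have hγ : 0 < γ := by
    rcases hγ0.eq_or_lt with h' | h'
    · rw [← h', mul_zero] at hαγ; exact absurd hαγ (lt_irrefl 0)
    · exact h'
  have hL1 : p ^ 2 + C ^ 2 = α ^ 2 * β ^ 2 := by rw [hpd, hCd, hα2, hβ2]; ring
  have hL2 : q ^ 2 + D ^ 2 = α ^ 2 * γ ^ 2 := by rw [hqd, hDd, hα2, hγ2]; ring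
  have hBC : r * α ^ 2 = p * q + C * D := by rw [hpd, hqd, hrd, hCd, hDd, hα2]; ring
  have h1' : p ^ 2 < (1 / 4) * (α ^ 2 * β ^ 2) := by
    have h := sq_lt_sq'' (by positivity) h1
    rw [mul_pow, mul_pow, sq_abs] at h
    linarith
  have h2' : q ^ 2 < (1 / 4) * (α ^ 2 * γ ^ 2) := by
    have h := sq_lt_sq'' (by positivity) h2
    rw [mul_pow, mul_pow, sq_abs] at h
    linarith
  have h3' : r ^ 2 < (1 / 4) * (β ^ 2 * γ ^ 2) := by
    have h := sq_lt_sq'' (by positivity) h3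
    rw [mul_pow, mul_pow, sq_abs] at h
    linarith
  have hC2 : (3 / 4) * (α ^ 2 * β ^ 2) < C ^ 2 := by linarith
  have hD2 : (3 / 4) * (α ^ 2 * γ ^ 2) < D ^ 2 := by linarith
  have hCD : (3 / 4) * (α ^ 2 * (β * γ)) < |C * D| := by
    have hsq : ((3 / 4) * (α ^ 2 * (β * γ))) ^ 2 < |C * D| ^ 2 := by
      rw [sq_abs]
      calc ((3 / 4) * (α ^ 2 * (β * γ))) ^ 2
          = ((3 / 4) * (α ^ 2 * β ^ 2)) * ((3 / 4) * (α ^ 2 * γ ^ 2)) := by ring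
        _ < C ^ 2 * D ^ 2 := mul_lt_mul'' hC2 hD2 (by positivity) (by positivity)
        _ = (C * D) ^ 2 := by ring
    exact lt_of_pow_lt_pow_left₀ 2 (abs_nonneg _) hsq
  have hpq : |p * q| < (1 / 4) * (α ^ 2 * (β * γ)) := by
    have hsq : |p * q| ^ 2 < ((1 / 4) * (α ^ 2 * (β * γ))) ^ 2 := by
      rw [sq_abs]
      calc (p * q) ^ 2 = p ^ 2 * q ^ 2 := by ring
        _ < ((1 / 4) * (α ^ 2 * β ^ 2)) * ((1 / 4) * (α ^ 2 * γ ^ 2)) :=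
            mul_lt_mul'' h1' h2' (sq_nonneg p) (sq_nonneg q)
        _ = ((1 / 4) * (α ^ 2 * (β * γ))) ^ 2 := by ring
    exact lt_of_pow_lt_pow_left₀ 2 (by positivity) hsq
  have htri : |C * D| ≤ |p * q + C * D| + |p * q| := by
    calc |C * D| = |(p * q + C * D) + -(p * q)| := by ring_nf
    _ ≤ |p * q + C * D| + |-(p * q)| := abs_add_le _ _
    _ = |p * q + C * D| + |p * q| := by rw [abs_neg]
  have habs : |p * q + C * D| = |r| * α ^ 2 := by
    rw [← hBC, abs_mul, abs_of_nonneg (sq_nonneg α)]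
  rw [habs] at htri
  have hkey : α ^ 2 * ((1 / 2) * (β * γ)) < α ^ 2 * |r| := by linarith [htri, hCD, hpq]
  have hfin : (1 / 2) * (β * γ) < |r| := lt_of_mul_lt_mul_left hkey (le_of_lt (by positivity))
  linarith

lemma dichot (x y z : E2) :
    ‖x‖ * ‖y‖ ≤ 2 * |(inner ℝ x y : ℝ)| ∨ ‖x‖ * ‖z‖ ≤ 2 * |(inner ℝ x z : ℝ)| ∨
      ‖y‖ * ‖z‖ ≤ 2 * |(inner ℝ y z : ℝ)| := by
  have hco : ∀ w : E2, ‖w‖ ^ 2 = (w 0) ^ 2 + (w 1) ^ 2 := by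
    intro w
    rw [EuclideanSpace.norm_eq, Real.sq_sqrt (by positivity)]
    simp [Fin.sum_univ_two, sq_abs]
  have hin : ∀ w w' : E2, (inner ℝ w w' : ℝ) = (w 0) * (w' 0) + (w 1) * (w' 1) := by
    intro w w'
    rw [PiLp.inner_apply]
    simp [Fin.sum_univ_two, RCLike.inner_apply, mul_comm]
  rw [hin x y, hin x z, hin y z]
  exact dichotR (x 0) (x 1) (y 0) (y 1) (z 0) (z 1) _ _ _ (hco x) (hco y) (hco z)
    (norm_nonneg x) (norm_nonneg y) (norm_nonneg z)

lemma three_lemma {δ : ℝ} {x y z : E2} (hx : ‖x‖ ≤ δ) (hy : ‖y‖ ≤ δ) (hz : ‖z‖ ≤ δ) :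
    (∃ s : ℝ, (s = 1 ∨ s = -1) ∧ ‖x + s • y‖ ≤ δ) ∨
    (∃ s : ℝ, (s = 1 ∨ s = -1) ∧ ‖x + s • z‖ ≤ δ) ∨
    (∃ s : ℝ, (s = 1 ∨ s = -1) ∧ ‖y + s • z‖ ≤ δ) :=
  (dichot x y z).imp (pair_lemma hx hy) (Or.imp (pair_lemma hx hz) (pair_lemma hy hz))

lemma blockAux (δ : ℝ) (hδ : 0 ≤ δ) (v : ℕ → E2) :
    ∀ m : ℕ, (∀ i, i < m → ‖v i‖ ≤ δ) →
    ∃ (ε : ℕ → ℝ) (T : Finset ℕ),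
      (∀ i, ε i = 1 ∨ ε i = -1) ∧ T ⊆ Finset.range m ∧
      ‖∑ i ∈ T, ε i • v i‖ ≤ δ ∧ ‖∑ i ∈ Finset.range m \ T, ε i • v i‖ ≤ δ ∧
      ∀ m', m' ≤ m → ‖∑ i ∈ T ∩ Finset.range m', ε i • v i‖ +
        ‖∑ i ∈ Finset.range m' \ T, ε i • v i‖ ≤ 2 * δ := by
  intro m
  induction m with
  | zero =>
    intro _
    refine ⟨fun _ => 1, ∅, fun i => Or.inl rfl, by simp, by simp [hδ], by simp [hδ], ?_⟩
    intro m' hm'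
    have h0 : m' = 0 := Nat.le_zero.mp hm'
    subst h0
    simp only [Finset.range_zero, Finset.inter_empty, Finset.empty_sdiff, Finset.sum_empty,
      norm_zero, add_zero]
    linarith
  | succ m ih =>
    intro hv
    obtain ⟨ε, T, hsgn, hTsub, hx, hy, hpre⟩ := ih (fun i hi => hv i (Nat.lt_succ_of_lt hi))
    have hmT : m ∉ T := fun h => absurd (Finset.mem_range.mp (hTsub h)) (lt_irrefl m)
    have hmR : m ∉ Finset.range m := by simp
    have hmD : m ∉ Finset.range m \ T := fun h => hmR (Finset.mem_sdiff.mp h).1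
    have hz : ‖v m‖ ≤ δ := hv m (Nat.lt_succ_self m)
    have hsubT : ∀ i ∈ T, i < m := fun i hi => Finset.mem_range.mp (hTsub hi)
    have hd1 : Finset.range (m + 1) \ Finset.range m = {m} := by
      ext i
      simp only [Finset.mem_sdiff, Finset.mem_range, Finset.mem_singleton]
      omega
    rcases three_lemma hx hy hz with ⟨s, hs, hcomb⟩ | ⟨s, hs, hcomb⟩ | ⟨s, hs, hcomb⟩
    · -- CASE A: merge T and its complement; new element becomes its own combo
      obtain ⟨ε', hε'⟩ : ∃ ε' : ℕ → ℝ,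
          ε' = fun i => if i ∈ Finset.range m \ T then s * ε i else if i = m then 1 else ε i :=
        ⟨_, rfl⟩
      have hA : ∀ i ∈ Finset.range m \ T, ε' i = s * ε i := by
        intro i hi; rw [hε']; simp only [if_pos hi]
      have hB : ∀ i ∈ T, ε' i = ε i := by
        intro i hi
        have h1 : i ∉ Finset.range m \ T := fun h => (Finset.mem_sdiff.mp h).2 hi
        have h2 : i ≠ m := Nat.ne_of_lt (hsubT i hi)
        rw [hε']; simp only [if_neg h1, if_neg h2]
      have hC : ε' m = 1 := by
        rw [hε']; simp [hmD]
      have hsgn' : ∀ i, ε' i = 1 ∨ ε' i = -1 := by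
        intro i
        by_cases h1 : i ∈ Finset.range m \ T
        · rw [hA i h1]
          rcases hs with h | h <;> rcases hsgn i with h' | h' <;> rw [h, h'] <;> norm_num
        · by_cases h2 : i = m
          · subst h2; rw [hC]; exact Or.inl rfl
          · rw [hε']; simp only [if_neg h1, if_neg h2]; exact hsgn i
      have hsnorm : ∀ w : E2, ‖s • w‖ = ‖w‖ := by
        intro w; rw [norm_smul]; rcases hs with h | h <;> rw [h] <;> simp
      have hsplit : ∀ m'', m'' ≤ m → ∑ i ∈ Finset.range m'', ε' i • v i =
          (∑ i ∈ T ∩ Finset.range m'', ε i • v i) +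
            s • ∑ i ∈ Finset.range m'' \ T, ε i • v i := by
        intro m'' hm''
        rw [← Finset.sum_inter_add_sum_sdiff (Finset.range m'') T (fun i => ε' i • v i)]
        congr 1
        · rw [Finset.inter_comm]
          refine Finset.sum_congr rfl fun i hi => ?_
          rw [hB i (Finset.mem_inter.mp hi).1]
        · rw [Finset.smul_sum]
          refine Finset.sum_congr rfl fun i hi => ?_
          have hi' : i ∈ Finset.range m \ T := by
            have h1 := Finset.mem_sdiff.mp hi
            exact Finset.mem_sdiff.mpr ⟨Finset.mem_range.mpr
              (lt_of_lt_of_le (Finset.mem_range.mp h1.1) hm''), h1.2⟩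
          rw [hA i hi', mul_smul]
      have hTm : T ∩ Finset.range m = T := Finset.inter_eq_left.mpr hTsub
      refine ⟨ε', Finset.range m, hsgn', Finset.range_subset_range.mpr (Nat.le_succ m), ?_, ?_, ?_⟩
      · rw [hsplit m le_rfl, hTm]
        exact hcomb
      · rw [hd1, Finset.sum_singleton, hC, one_smul]
        exact hz
      · intro m' hm'
        rcases eq_or_lt_of_le hm' with heq | hlt
        · subst heq
          have e1 : Finset.range m ∩ Finset.range (m + 1) = Finset.range m := by
            ext i; simp only [Finset.mem_inter, Finset.mem_range]; omega
          rw [e1, hd1, Finset.sum_singleton, hC, one_smul, hsplit m le_rfl, hTm]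
          linarith
        · have hm'' : m' ≤ m := Nat.lt_succ_iff.mp hlt
          have e1 : Finset.range m ∩ Finset.range m' = Finset.range m' := by
            ext i; simp only [Finset.mem_inter, Finset.mem_range]; omega
          have e2 : Finset.range m' \ Finset.range m = ∅ := by
            ext i; simp only [Finset.mem_sdiff, Finset.mem_range, Finset.notMem_empty,
              iff_false, not_and, not_lt]
            omega
          rw [e1, e2, Finset.sum_empty, norm_zero, add_zero, hsplit m' hm'']
          have hb := norm_add_le (∑ i ∈ T ∩ Finset.range m', ε i • v i)
            (s • ∑ i ∈ Finset.range m' \ T, ε i • v i)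
          rw [hsnorm] at hb
          linarith [hpre m' hm'']
    · -- CASE B: put m into T
      obtain ⟨ε', hε'⟩ : ∃ ε' : ℕ → ℝ, ε' = Function.update ε m s := ⟨_, rfl⟩
      have hA : ∀ i, i ≠ m → ε' i = ε i := by
        intro i hi; rw [hε']; exact Function.update_of_ne hi s ε
      have hC : ε' m = s := by rw [hε']; exact Function.update_self m s ε
      have hsgn' : ∀ i, ε' i = 1 ∨ ε' i = -1 := by
        intro i
        by_cases h2 : i = m
        · subst h2; rw [hC]; exact hs
        · rw [hA i h2]; exact hsgn i
      have hpresv : ∀ S : Finset ℕ, m ∉ S →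
          ∑ i ∈ S, ε' i • v i = ∑ i ∈ S, ε i • v i := by
        intro S hS
        refine Finset.sum_congr rfl fun i hi => ?_
        rw [hA i (fun h => hS (h ▸ hi))]
      have hins : ∑ i ∈ insert m T, ε' i • v i =
          (∑ i ∈ T, ε i • v i) + s • v m := by
        rw [Finset.sum_insert hmT, hpresv T hmT, hC, add_comm]
      have hdiff : Finset.range (m + 1) \ insert m T = Finset.range m \ T := by
        ext i
        simp only [Finset.mem_sdiff, Finset.mem_insert, Finset.mem_range, not_or]
        constructor
        · rintro ⟨h1, h2, h3⟩; exact ⟨by omega, h3⟩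
        · rintro ⟨h1, h2⟩; exact ⟨by omega, by omega, h2⟩
      refine ⟨ε', insert m T, hsgn', ?_, ?_, ?_, ?_⟩
      · intro i hi
        rcases Finset.mem_insert.mp hi with h | h
        · subst h; exact Finset.self_mem_range_succ i
        · exact Finset.mem_range.mpr (by have := hsubT i h; omega)
      · rw [hins]; exact hcomb
      · rw [hdiff, hpresv _ hmD]; exact hy
      · intro m' hm'
        rcases eq_or_lt_of_le hm' with heq | hlt
        · subst heq
          have e1 : insert m T ∩ Finset.range (m + 1) = insert m T :=
            Finset.inter_eq_left.mpr (Finset.insert_subset (Finset.self_mem_range_succ m)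
              (hTsub.trans (Finset.range_subset_range.mpr (Nat.le_succ m))))
          rw [e1, hins, hdiff, hpresv _ hmD]
          linarith
        · have hm'' : m' ≤ m := Nat.lt_succ_iff.mp hlt
          have e1 : insert m T ∩ Finset.range m' = T ∩ Finset.range m' := by
            ext i
            simp only [Finset.mem_inter, Finset.mem_insert, Finset.mem_range]
            constructor
            · rintro ⟨h1 | h1, h2⟩
              · exact absurd (h1 ▸ h2) (by omega)
              · exact ⟨h1, h2⟩
            · rintro ⟨h1, h2⟩; exact ⟨Or.inr h1, h2⟩
          have e2 : Finset.range m' \ insert m T = Finset.range m' \ T := by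
            ext i
            simp only [Finset.mem_sdiff, Finset.mem_insert, Finset.mem_range, not_or]
            constructor
            · rintro ⟨h1, _, h3⟩; exact ⟨h1, h3⟩
            · rintro ⟨h1, h2⟩; exact ⟨h1, by omega, h2⟩
          have hm1 : m ∉ T ∩ Finset.range m' := fun h => by
            have := Finset.mem_range.mp (Finset.mem_inter.mp h).2; omega
          have hm2 : m ∉ Finset.range m' \ T := fun h => by
            have := Finset.mem_range.mp (Finset.mem_sdiff.mp h).1; omega
          rw [e1, e2, hpresv _ hm1, hpresv _ hm2]
          exact hpre m' hm''
    · -- CASE C: put m into the complement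
      obtain ⟨ε', hε'⟩ : ∃ ε' : ℕ → ℝ, ε' = Function.update ε m s := ⟨_, rfl⟩
      have hA : ∀ i, i ≠ m → ε' i = ε i := by
        intro i hi; rw [hε']; exact Function.update_of_ne hi s ε
      have hC : ε' m = s := by rw [hε']; exact Function.update_self m s ε
      have hsgn' : ∀ i, ε' i = 1 ∨ ε' i = -1 := by
        intro i
        by_cases h2 : i = m
        · subst h2; rw [hC]; exact hs
        · rw [hA i h2]; exact hsgn i
      have hpresv : ∀ S : Finset ℕ, m ∉ S →
          ∑ i ∈ S, ε' i • v i = ∑ i ∈ S, ε i • v i := by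
        intro S hS
        refine Finset.sum_congr rfl fun i hi => ?_
        rw [hA i (fun h => hS (h ▸ hi))]
      have hdiff : Finset.range (m + 1) \ T = insert m (Finset.range m \ T) := by
        ext i
        simp only [Finset.mem_sdiff, Finset.mem_insert, Finset.mem_range]
        constructor
        · rintro ⟨h1, h2⟩
          rcases Nat.lt_succ_iff_lt_or_eq.mp h1 with h | h
          · exact Or.inr ⟨h, h2⟩
          · exact Or.inl h
        · rintro (h | ⟨h1, h2⟩)
          · subst h; exact ⟨Nat.lt_succ_self i, hmT⟩
          · exact ⟨by omega, h2⟩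
      have hins : ∑ i ∈ Finset.range (m + 1) \ T, ε' i • v i =
          (∑ i ∈ Finset.range m \ T, ε i • v i) + s • v m := by
        rw [hdiff, Finset.sum_insert hmD, hpresv _ hmD, hC, add_comm]
      refine ⟨ε', T, hsgn', hTsub.trans (Finset.range_subset_range.mpr (Nat.le_succ m)), ?_, ?_, ?_⟩
      · rw [hpresv T hmT]; exact hx
      · rw [hins]; exact hcomb
      · intro m' hm'
        rcases eq_or_lt_of_le hm' with heq | hlt
        · subst heq
          have e1 : T ∩ Finset.range (m + 1) = T :=
            Finset.inter_eq_left.mpr (hTsub.trans (Finset.range_subset_range.mpr (Nat.le_succ m)))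
          rw [e1, hpresv T hmT, hins]
          linarith
        · have hm'' : m' ≤ m := Nat.lt_succ_iff.mp hlt
          have hm1 : m ∉ T ∩ Finset.range m' := fun h => by
            have := Finset.mem_range.mp (Finset.mem_inter.mp h).2; omega
          have hm2 : m ∉ Finset.range m' \ T := fun h => by
            have := Finset.mem_range.mp (Finset.mem_sdiff.mp h).1; omega
          rw [hpresv _ hm1, hpresv _ hm2]
          exact hpre m' hm''

lemma blockPrefix (δ : ℝ) (hδ : 0 ≤ δ) (v : ℕ → E2) (m : ℕ) (hv : ∀ i, i < m → ‖v i‖ ≤ δ) :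
    ∃ ε : ℕ → ℝ, (∀ i, ε i = 1 ∨ ε i = -1) ∧
      ∀ m', m' ≤ m → ‖∑ i ∈ Finset.range m', ε i • v i‖ ≤ 2 * δ := by
  obtain ⟨ε, T, hsgn, _, _, _, hpre⟩ := blockAux δ hδ v m hv
  refine ⟨ε, hsgn, fun m' hm' => ?_⟩
  rw [← Finset.sum_inter_add_sum_sdiff (Finset.range m') T (fun i => ε i • v i),
    Finset.inter_comm]
  calc ‖(∑ i ∈ T ∩ Finset.range m', ε i • v i) + ∑ i ∈ Finset.range m' \ T, ε i • v i‖
      ≤ ‖∑ i ∈ T ∩ Finset.range m', ε i • v i‖ + ‖∑ i ∈ Finset.range m' \ T, ε i • v i‖ :=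
        norm_add_le _ _
    _ ≤ 2 * δ := hpre m' hm'

theorem stmt6 (a : ℕ → EuclideanSpace ℝ (Fin 2))
    (h : Tendsto (fun n => ‖a n‖) atTop (nhds 0)) :
    ∃ ε : ℕ → ℝ, (∀ i, ε i = 1 ∨ ε i = -1) ∧
      ∃ l, Tendsto (fun N => ∑ i ∈ Finset.range N, ε i • a i) atTop (nhds l) := by
  -- a uniform bound
  obtain ⟨B0, hB0⟩ := h.bddAbove_range
  have hBa : ∀ i, ‖a i‖ ≤ max B0 1 :=
    fun i => le_trans (hB0 (Set.mem_range_self i)) (le_max_left _ _)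
  obtain ⟨B, hB, hBa⟩ : ∃ B : ℝ, 0 < B ∧ ∀ i, ‖a i‖ ≤ B :=
    ⟨max B0 1, lt_of_lt_of_le one_pos (le_max_right _ _), hBa⟩
  -- tails
  have htail : ∀ k : ℕ, ∃ N, ∀ i, N ≤ i → ‖a i‖ ≤ B * (1 / 2) ^ k := by
    intro k
    have hpos : 0 < B * (1 / 2) ^ k := by positivity
    obtain ⟨N, hN⟩ := (Metric.tendsto_atTop.mp h) _ hpos
    refine ⟨N, fun i hi => ?_⟩
    have := hN i hi
    rw [Real.dist_eq, sub_zero, abs_of_nonneg (norm_nonneg _)] at this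
    linarith
  -- block boundaries
  obtain ⟨n, hn0, hnstep⟩ : ∃ n : ℕ → ℕ, n 0 = 0 ∧
      ∀ k, n (k + 1) = max ((htail (k + 1)).choose) (n k) + 1 :=
    ⟨fun k => Nat.rec 0 (fun k' nk => max ((htail (k' + 1)).choose) nk + 1) k, rfl,
      fun k => rfl⟩
  have hnmono : StrictMono n := strictMono_nat_of_lt_succ (fun k => by rw [hnstep]; omega)
  have hnb : ∀ k i, n k ≤ i → ‖a i‖ ≤ B * (1 / 2) ^ k := by
    intro k i hi
    cases k with
    | zero => simpa using hBa i
    | succ k =>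
      refine (htail (k + 1)).choose_spec i ?_
      rw [hnstep] at hi
      omega
  -- signs for each block
  have hblocks : ∀ k, ∃ ε : ℕ → ℝ, (∀ i, ε i = 1 ∨ ε i = -1) ∧
      ∀ m', m' ≤ n (k + 1) - n k →
        ‖∑ j ∈ Finset.range m', ε j • a (n k + j)‖ ≤ 2 * (B * (1 / 2) ^ k) :=
    fun k => blockPrefix _ (by positivity) (fun j => a (n k + j)) (n (k + 1) - n k)
      (fun j _ => hnb k _ (Nat.le_add_right _ _))
  choose εb hεbsgn hεbpre using hblocks
  -- block index of a position
  obtain ⟨K, hK1, hK2⟩ : ∃ K : ℕ → ℕ, (∀ i, n (K i) ≤ i) ∧ (∀ i, i < n (K i + 1)) := by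
    have hnk_ge : ∀ k, k ≤ n k := fun k => hnmono.le_apply
    refine ⟨fun i => Nat.findGreatest (fun k => n k ≤ i) i, fun i => ?_, fun i => ?_⟩
    · show n (Nat.findGreatest (fun k => n k ≤ i) i) ≤ i
      exact Nat.findGreatest_spec (P := fun k => n k ≤ i) (Nat.zero_le i) (show n 0 ≤ i by rw [hn0]; exact Nat.zero_le i)
    · show i < n (Nat.findGreatest (fun k => n k ≤ i) i + 1)
      by_contra hcon
      push_neg at hcon
      have hle : Nat.findGreatest (fun k => n k ≤ i) i + 1 ≤ i :=
        le_trans (hnk_ge _) hcon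
      exact absurd hcon
        (Nat.findGreatest_is_greatest (P := fun k => n k ≤ i) (Nat.lt_succ_self _) hle)
  have hKuniq : ∀ k i, n k ≤ i → i < n (k + 1) → K i = k := by
    intro k i h1 h2
    rcases lt_trichotomy (K i) k with hlt | he | hgt
    · have h3 : n (K i + 1) ≤ n k := hnmono.monotone (by omega)
      have h4 := hK2 i
      omega
    · exact he
    · have h3 : n (k + 1) ≤ n (K i) := hnmono.monotone (by omega)
      have h4 := hK1 i
      omega
  have hKge : ∀ k i, n k ≤ i → k ≤ K i := by
    intro k i h1
    by_contra hcon
    push_neg at hcon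
    have h2 := hK2 i
    have h3 : n (K i + 1) ≤ n k := hnmono.monotone (by omega)
    omega
  -- the global sign sequence
  refine ⟨fun i => εb (K i) (i - n (K i)), fun i => hεbsgn _ _, ?_⟩
  obtain ⟨ε, hεdef⟩ : ∃ ε : ℕ → ℝ, ε = fun i => εb (K i) (i - n (K i)) := ⟨_, rfl⟩
  rw [← hεdef]
  have hεblock : ∀ k j, j < n (k + 1) - n k → ε (n k + j) = εb k j := by
    intro k j hj
    have h2 : n k + j < n (k + 1) := by
      have := hnmono (Nat.lt_succ_self k)
      omega
    rw [hεdef]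
    simp only
    rw [hKuniq k _ (Nat.le_add_right _ _) h2]
    congr 1
    omega
  have hIco : ∀ k N, n k ≤ N → N ≤ n (k + 1) →
      ∑ i ∈ Finset.Ico (n k) N, ε i • a i
        = ∑ j ∈ Finset.range (N - n k), εb k j • a (n k + j) := by
    intro k N h1 h2
    rw [Finset.sum_Ico_eq_sum_range]
    refine Finset.sum_congr rfl fun j hj => ?_
    have hj' := Finset.mem_range.mp hj
    rw [hεblock k j (by omega)]
  have hIcobound : ∀ k N, n k ≤ N → N ≤ n (k + 1) →
      ‖∑ i ∈ Finset.Ico (n k) N, ε i • a i‖ ≤ 2 * B * (1 / 2) ^ k := by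
    intro k N h1 h2
    rw [hIco k N h1 h2]
    calc ‖∑ j ∈ Finset.range (N - n k), εb k j • a (n k + j)‖
        ≤ 2 * (B * (1 / 2) ^ k) := hεbpre k (N - n k) (by omega)
      _ = 2 * B * (1 / 2) ^ k := by ring
  obtain ⟨c, hcdef⟩ : ∃ c : ℕ → E2,
      c = fun k => ∑ i ∈ Finset.Ico (n k) (n (k + 1)), ε i • a i := ⟨_, rfl⟩
  have hcb : ∀ k, ‖c k‖ ≤ 2 * B * (1 / 2) ^ k := by
    intro k
    rw [hcdef]
    exact hIcobound k (n (k + 1)) (le_of_lt (hnmono (Nat.lt_succ_self k))) le_rfl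
  have hsummable : Summable c :=
    Summable.of_norm_bounded (g := fun k => 2 * B * (1 / 2) ^ k)
      ((summable_geometric_of_lt_one (by norm_num) (by norm_num)).mul_left (2 * B)) hcb
  obtain ⟨l, hl⟩ := hsummable
  have hT : Tendsto (fun m => ∑ k ∈ Finset.range m, c k) atTop (nhds l) :=
    hl.tendsto_sum_nat
  have hTel : ∀ m, ∑ k ∈ Finset.range m, c k = ∑ i ∈ Finset.range (n m), ε i • a i := by
    intro m
    induction m with
    | zero => rw [hn0]; simp
    | succ m ihm =>
      rw [Finset.sum_range_succ, ihm, hcdef]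
      exact Finset.sum_range_add_sum_Ico _ (le_of_lt (hnmono (Nat.lt_succ_self m)))
  have hsplitN : ∀ N, ∑ i ∈ Finset.range N, ε i • a i =
      (∑ k ∈ Finset.range (K N), c k) + ∑ i ∈ Finset.Ico (n (K N)) N, ε i • a i := by
    intro N
    rw [hTel, Finset.sum_range_add_sum_Ico _ (hK1 N)]
  have hKtop : Tendsto K atTop atTop :=
    tendsto_atTop_atTop.mpr (fun b => ⟨n b, fun i hi => hKge b i hi⟩)
  have hg0 : Tendsto (fun k : ℕ => 2 * B * (1 / 2) ^ k) atTop (nhds 0) := by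
    have := (tendsto_pow_atTop_nhds_zero_of_lt_one (by norm_num : (0:ℝ) ≤ 1 / 2)
      (by norm_num)).const_mul (2 * B)
    simpa using this
  have hR : Tendsto (fun N => ∑ i ∈ Finset.Ico (n (K N)) N, ε i • a i) atTop (nhds 0) :=
    squeeze_zero_norm (fun N => hIcobound (K N) N (hK1 N) (le_of_lt (hK2 N)))
      (hg0.comp hKtop)
  refine ⟨l, ?_⟩
  have hfun : (fun N => ∑ i ∈ Finset.range N, ε i • a i) =
      fun N => (∑ k ∈ Finset.range (K N), c k) + ∑ i ∈ Finset.Ico (n (K N)) N, ε i • a i :=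
    funext hsplitN
  rw [hfun]
  simpa using (hT.comp hKtop).add hR
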